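/- There exist constants C > 0 and θ₀ > 0 such that for all θ ∈ (0, θ₀), any φ ∈ (0, π/4) satisfying (1 - tan φ)·cos(φ + θ) = 1 - sin(φ + θ) also satisfies |φ - √(2θ)| ≤ C·θ. -/

import Mathlib

set_option maxHeartbeats 1000000 in
theorem stmt_1 : ∃ C > (0:ℝ), ∃ θ₀ > (0:ℝ), ∀ θ : ℝ, θ ∈ Set.Ioo 0 θ₀ →
    ∀ φ ∈ Set.Ioo (0:ℝ) (Real.pi / 4),
      (1 - Real.tan φ) * Real.cos (φ + θ) = 1 - Real.sin (φ + θ) →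
      |φ - Real.sqrt (2 * θ)| ≤ C * θ := by
  refine ⟨5, by norm_num, 1/100, by norm_num, ?_⟩
  rintro θ ⟨hθ0, hθ1⟩ φ ⟨hφ0, hφ1⟩ heq
  have hπ : Real.pi < 3.15 := Real.pi_lt_d2
  have hπ3 : (3:ℝ) < Real.pi := Real.pi_gt_three
  have hφ1' : φ < 0.99 := by linarith only [hφ1, hπ]
  have hφhalf : φ < Real.pi / 2 := by linarith only [hφ1, hπ3]
  have hcosφ : 0 < Real.cos φ := Real.cos_pos_of_mem_Ioo ⟨by linarith only [hφ0, hπ3], hφhalf⟩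
  -- key identity : cos φ * (1 - cos (φ+θ)) = sin θ
  have hsinsub := Real.sin_sub (φ + θ) φ
  rw [show φ + θ - φ = θ by ring] at hsinsub
  rw [Real.tan_eq_sin_div_cos] at heq
  have h2 : (Real.cos φ - Real.sin φ) * Real.cos (φ + θ) =
      Real.cos φ * (1 - Real.sin (φ + θ)) := by
    field_simp at heq
    linarith only [heq]
  have hkey : Real.cos φ * (1 - Real.cos (φ + θ)) = Real.sin θ := by
    nlinarith [h2, hsinsub]
  clear h2 heq hsinsub
  set x : ℝ := φ + θ with hx
  clear_value x
  have hx0 : 0 < x := by rw [hx]; positivity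
  have hx1 : x < 1 := by rw [hx]; linarith only [hφ1', hθ1]
  -- half angle: 1 - cos x = 2 sin(x/2)^2
  have hhalf : 1 - Real.cos x = 2 * Real.sin (x/2) ^ 2 := by
    have h := Real.sin_sq_eq_half_sub (x/2)
    rw [show 2 * (x/2) = x by ring] at h
    linarith only [h]
  have hu0 : 0 < x/2 := by linarith only [hx0]
  have hu1 : x/2 ≤ 1 := by linarith only [hx1, hx0]
  have hsin_u_lb : x/2 - (x/2)^3/4 < Real.sin (x/2) := by
    have h := Real.sin_gt_sub_cube hu0; have := pow_pos hu0 3; linarith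
  have hsin_u_ub : Real.sin (x/2) ≤ x/2 := Real.sin_le (le_of_lt hu0)
  have hx2le1 : x^2 ≤ 1 := by nlinarith only [hx0, hx1]
  have hx4 : x^4 ≤ x^2 := by
    have h := mul_nonneg (sq_nonneg x) (sub_nonneg.2 hx2le1)
    nlinarith only [h]
  have ht_pos : 0 < x/2 - (x/2)^3/4 := by
    have h := mul_nonneg hx0.le (sub_nonneg.2 hx2le1)
    nlinarith only [h, hx0]
  have hsin_u_pos : 0 < Real.sin (x/2) := lt_trans ht_pos hsin_u_lb
  set c : ℝ := Real.cos φ with hc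
  set d : ℝ := 1 - Real.cos x with hd
  set s : ℝ := Real.sin θ with hs
  -- bounds on 1 - cos x
  have hd_ub : d ≤ x^2/2 := by
    have p1 := pow_le_pow_left₀ hsin_u_pos.le hsin_u_ub 2
    rw [hd]; nlinarith only [hhalf, p1]
  have hd_lb : 2 * (x/2 - (x/2)^3/4)^2 ≤ d := by
    have p2 := pow_le_pow_left₀ ht_pos.le hsin_u_lb.le 2
    rw [hd]; nlinarith only [hhalf, p2]
  -- bounds on sin θ
  have hsθ_ub : s ≤ θ := by rw [hs]; exact Real.sin_le (le_of_lt hθ0)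
  have hsθ_lb : θ - θ^3/4 < s := by
    rw [hs]; have h := Real.sin_gt_sub_cube hθ0; have := pow_pos hθ0 3; linarith
  -- cos φ bounds
  have hcφ_ub : c ≤ 1 := by rw [hc]; exact Real.cos_le_one φ
  have hcφ_lb : 1 - φ^2/2 ≤ c := by rw [hc]; exact Real.one_sub_sq_div_two_le_cos
  clear_value c d s
  clear hhalf hsin_u_lb hsin_u_ub hsin_u_pos hd hs hc
  have hd0 : 0 ≤ d := le_trans (by positivity) hd_lb
  have hx6 : (0:ℝ) ≤ x^6 := by positivity
  have hd_lb_small : (7/16) * x^2 ≤ d := by nlinarith only [hd_lb, hx4, hx6]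
  have hφsq : φ^2 ≤ 1 := by nlinarith only [hφ0, hφ1']
  have hcφ_half : (1:ℝ)/2 ≤ c := by linarith only [hcφ_lb, hφsq]
  -- d ≤ 2θ and smallness x² ≤ 5θ
  have pcd : 0 ≤ (c - 1/2) * d := mul_nonneg (by linarith only [hcφ_half]) hd0
  have hd2θ : d ≤ 2*θ := by nlinarith only [pcd, hkey, hsθ_ub]
  have hsmall : x^2 ≤ 5*θ := by linarith only [hd_lb_small, hd2θ, hθ0]
  -- refined bounds
  have p3 : x^2*x^2 ≤ (5*θ)*x^2 := mul_le_mul_of_nonneg_right hsmall (sq_nonneg x)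
  have p4 : φ^2 ≤ x^2 := by
    rw [hx]; nlinarith only [mul_nonneg hφ0.le hθ0.le, sq_nonneg θ]
  have hcφ_lb2 : 1 - (5/2)*θ ≤ c := by linarith only [hcφ_lb, p4, hsmall]
  have p5 : 0 ≤ (c - (1 - (5/2)*θ)) * d := mul_nonneg (by linarith only [hcφ_lb2]) hd0
  have p6 : θ*d ≤ θ*(2*θ) := mul_le_mul_of_nonneg_left hd2θ hθ0.le
  have p7 : θ*x^2 ≤ θ*(5*θ) := mul_le_mul_of_nonneg_left hsmall hθ0.le
  -- main upper: x² ≤ 2θ + 14θ²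
  have hxsq_ub : x^2 ≤ 2*θ + 14*θ^2 := by
    nlinarith only [hd_lb, p3, p5, p6, p7, hkey, hsθ_ub, hx6, hd0]
  -- main lower: x² ≥ 2θ - θ³/2
  have p8 : 0 ≤ (1 - c) * d := mul_nonneg (by linarith only [hcφ_ub]) hd0
  have hxsq_lb : 2*θ - θ^3/2 ≤ x^2 := by nlinarith only [p8, hkey, hsθ_lb, hd_ub]
  -- sqrt facts
  set a : ℝ := Real.sqrt (2*θ) with ha
  have ha0 : 0 ≤ a := Real.sqrt_nonneg _
  have hasq : a^2 = 2*θ := Real.sq_sqrt (by linarith only [hθ0])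
  have ha14 : 14*θ ≤ a := by
    rw [ha]
    rw [show (14:ℝ)*θ = Real.sqrt ((14*θ)^2) by rw [Real.sqrt_sq (by linarith only [hθ0])]]
    apply Real.sqrt_le_sqrt
    nlinarith only [hθ0, hθ1]
  clear_value a
  have pθa : θ*(14*θ) ≤ θ*a := mul_le_mul_of_nonneg_left ha14 hθ0.le
  have pθ3 : θ*θ^2 ≤ 1*θ^2 := mul_le_mul_of_nonneg_right (by linarith only [hθ1]) (sq_nonneg θ)
  have hub : x ≤ a + 5*θ := by
    have hsq : x^2 ≤ (a + 5*θ)^2 := by nlinarith only [hxsq_ub, hasq, pθa, sq_nonneg θ]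
    have h := Real.sqrt_le_sqrt hsq
    rwa [Real.sqrt_sq hx0.le, Real.sqrt_sq (by positivity)] at h
  have hlb : a - 4*θ ≤ x := by
    rcases le_or_gt (a - 4*θ) 0 with h | h
    · linarith only [h, hx0]
    · have hsq : (a - 4*θ)^2 ≤ x^2 := by nlinarith only [hxsq_lb, hasq, pθa, pθ3, hθ0]
      have h2 := Real.sqrt_le_sqrt hsq
      rwa [Real.sqrt_sq h.le, Real.sqrt_sq hx0.le] at h2
  rw [abs_le]
  rw [hx] at hub hlb
  constructor
  · linarith only [hlb, hθ0]
  · linarith only [hub, hθ0]
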